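/- Let N ≥ 0 and let β be the unique root in (N+1, N+2) of x³ = (N+1)(x² + x + 1). Then ∑_{k≥0} ( (N+1)/β^{3k+1} + (N+1)/β^{3k+2} + N/β^{3k+3} ) = 1, i.e., ((N+1)(N+1)N)^∞ is an expansion of 1 in base β. -/

import Mathlib

/-- ((N+1)(N+1)N)^∞ is an expansion of 1 in base β_G(3N+2). -/
theorem golden_expansion_3N2 (N : ℕ) (β : ℝ)
    (hβ : β ∈ Set.Ioo ((N : ℝ) + 1) ((N : ℝ) + 2))
    (hroot : β ^ 3 = ((N : ℝ) + 1) * (β ^ 2 + β + 1)) :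
    ∑' k : ℕ, (((N : ℝ) + 1) / β ^ (3 * k + 1) +
        ((N : ℝ) + 1) / β ^ (3 * k + 2) + (N : ℝ) / β ^ (3 * k + 3)) = 1 := by
  obtain ⟨h1, h2⟩ := hβ
  have hN : (0 : ℝ) ≤ N := Nat.cast_nonneg N
  have hβ1 : 1 < β := by linarith
  have hβ0 : β ≠ 0 := by linarith
  have hβ3 : 1 < β ^ 3 := one_lt_pow₀ hβ1 (by norm_num)
  have hr0 : (0 : ℝ) ≤ (β ^ 3)⁻¹ := by positivity
  have hr1 : (β ^ 3)⁻¹ < 1 := inv_lt_one_of_one_lt₀ hβ3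
  set C : ℝ := ((N : ℝ) + 1) / β + ((N : ℝ) + 1) / β ^ 2 + (N : ℝ) / β ^ 3 with hC
  have key : ∀ k : ℕ, (((N : ℝ) + 1) / β ^ (3 * k + 1) +
      ((N : ℝ) + 1) / β ^ (3 * k + 2) + (N : ℝ) / β ^ (3 * k + 3))
      = C * ((β ^ 3)⁻¹) ^ k := by
    intro k
    have e : ∀ j : ℕ, β ^ (3 * k + j) = (β ^ 3) ^ k * β ^ j := by
      intro j; rw [pow_add, pow_mul]
    rw [e 1, e 2, e 3, hC]
    field_simp
    rw [one_div, inv_pow]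
    field_simp
  rw [tsum_congr key, tsum_mul_left, tsum_geometric_of_lt_one hr0 hr1]
  have h3 : β ^ 3 - 1 ≠ 0 := by linarith
  rw [hC]
  field_simp
  linear_combination -hroot
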